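/- Let X be a real Banach space, let K : X×X → ℝ be a kernel satisfying conditions (1)–(5) below, and let f : X → ℝ ∪ {+∞} be proper, lower semicontinuous and bounded below. If 0 < α ≤ 1 and c_K is Fréchet differentiable with α-Hölder continuous derivative on X, then for every n ∈ ℕ the Δ-convex function Δ_{K,n} f is Fréchet differentiable with α-Hölder continuous derivative on X. -/

import Mathlib

open scoped BigOperators

/-- The convex envelope of a function `h : X → ℝ`, given by the infimum over all
finite convex combinations. -/
noncomputable def convEnv {X : Type*} [NormedAddCommGroup X] [NormedSpace ℝ X]
    (h : X → ℝ) (x : X) : ℝ :=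
  sInf { r : ℝ | ∃ (m : ℕ) (l : Fin m → ℝ) (z : Fin m → X),
    (∀ i, 0 < l i) ∧ ∑ i, l i = 1 ∧ ∑ i, l i • z i = x ∧ ∑ i, l i * h (z i) = r }

/-- The inf-convolution `I_{K,n} f (x) = inf_y ( f(y) + n K(x,y) )` for `f` with values
in `ℝ ∪ {+∞} ⊆ EReal`. -/
noncomputable def infConvK {X : Type*} [NormedAddCommGroup X]
    (K : X → X → ℝ) (f : X → EReal) (n : ℕ) (x : X) : EReal :=
  ⨅ y, f y + (((n : ℝ) * K x y : ℝ) : EReal)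

/-- `Δ_{K,n} f = co( I_{K,n} f + n c_K ) − n c_K`. -/
noncomputable def DeltaK {X : Type*} [NormedAddCommGroup X] [NormedSpace ℝ X]
    (K : X → X → ℝ) (cK : X → ℝ) (f : X → EReal) (n : ℕ) (x : X) : ℝ :=
  convEnv (fun z => (infConvK K f n z).toReal + (n : ℝ) * cK z) x - (n : ℝ) * cK x

open Filter Pointwise

section AUX

section A
variable {X : Type*} [NormedAddCommGroup X] [NormedSpace ℝ X]

lemma secdiff_holder (φ : X → ℝ) (hd : Differentiable ℝ φ) {L a : ℝ} (ha : 0 < a) (hL : 0 ≤ L)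
    (hH : ∀ x y, ‖fderiv ℝ φ x - fderiv ℝ φ y‖ ≤ L * ‖x - y‖ ^ a) :
    ∀ z t : X, φ (z + t) + φ (z - t) - 2 * φ z ≤ 2 * L * ‖t‖ ^ a * ‖t‖ := by
  intro z t
  have hball : ∀ c ∈ Metric.closedBall z ‖t‖, ‖fderiv ℝ φ c - fderiv ℝ φ z‖ ≤ L * ‖t‖ ^ a := by
    intro c hc
    rw [Metric.mem_closedBall, dist_eq_norm] at hc
    exact (hH c z).trans (by gcongr)
  have key : ∀ w : X, ‖w‖ ≤ ‖t‖ →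
      ‖φ (z + w) - φ z - (fderiv ℝ φ z) w‖ ≤ (L * ‖t‖ ^ a) * ‖w‖ := by
    intro w hw
    have h1 := Convex.norm_image_sub_le_of_norm_fderiv_le'
      (f := φ) (φ := fderiv ℝ φ z) (x := z) (y := z + w) (s := Metric.closedBall z ‖t‖) (C := L * ‖t‖ ^ a)
      (fun c _ => hd c) hball (convex_closedBall z ‖t‖)
      (Metric.mem_closedBall_self (norm_nonneg t))
      (by rw [Metric.mem_closedBall, dist_eq_norm, add_sub_cancel_left]; exact hw)
    simpa using h1
  have k1 := key t le_rfl
  have k2 := key (-t) (by simp)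
  rw [Real.norm_eq_abs, abs_le] at k1 k2
  have e1 : (fderiv ℝ φ z) (-t) = -(fderiv ℝ φ z) t := map_neg _ _
  rw [e1] at k2
  simp only [norm_neg] at k2
  have : z + -t = z - t := by abel
  rw [this] at k2
  nlinarith [k1.2, k2.2]
end A



section B
variable {X : Type*} [NormedAddCommGroup X] [NormedSpace ℝ X]

def coSet (h : X → ℝ) (x : X) : Set ℝ :=
  { r : ℝ | ∃ (m : ℕ) (l : Fin m → ℝ) (z : Fin m → X),
    (∀ i, 0 < l i) ∧ ∑ i, l i = 1 ∧ ∑ i, l i • z i = x ∧ ∑ i, l i * h (z i) = r }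

lemma convEnv_eq (h : X → ℝ) (x : X) : convEnv h x = sInf (coSet h x) := rfl

lemma self_mem_coSet (h : X → ℝ) (x : X) : h x ∈ coSet h x :=
  ⟨1, fun _ => 1, fun _ => x, fun _ => one_pos, by simp, by simp, by simp⟩

lemma coSet_lower {h : X → ℝ} {b : ℝ} {φ : X →L[ℝ] ℝ} (hlb : ∀ z, b + φ z ≤ h z)
    {x : X} {r : ℝ} (hr : r ∈ coSet h x) : b + φ x ≤ r := by
  obtain ⟨m, l, z, hl, hs, hz, hsum⟩ := hr
  have hφ : φ x = ∑ i, l i * φ (z i) := by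
    rw [← hz, map_sum]
    simp [smul_eq_mul]
  calc b + φ x = ∑ i, l i * (b + φ (z i)) := by
        simp only [mul_add, Finset.sum_add_distrib, ← Finset.sum_mul, hs, hφ, one_mul]
    _ ≤ ∑ i, l i * h (z i) :=
        Finset.sum_le_sum fun i _ => mul_le_mul_of_nonneg_left (hlb (z i)) (hl i).le
    _ = r := hsum

lemma coSet_bddBelow {h : X → ℝ} {b : ℝ} {φ : X →L[ℝ] ℝ} (hlb : ∀ z, b + φ z ≤ h z)
    (x : X) : BddBelow (coSet h x) :=
  ⟨b + φ x, fun _ hr => coSet_lower hlb hr⟩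

lemma convEnv_le_self {h : X → ℝ} {b : ℝ} {φ : X →L[ℝ] ℝ} (hlb : ∀ z, b + φ z ≤ h z)
    (x : X) : convEnv h x ≤ h x :=
  csInf_le (coSet_bddBelow hlb x) (self_mem_coSet h x)

lemma le_convEnv {h : X → ℝ} {b : ℝ} {φ : X →L[ℝ] ℝ} (hlb : ∀ z, b + φ z ≤ h z)
    (x : X) : b + φ x ≤ convEnv h x :=
  le_csInf ⟨h x, self_mem_coSet h x⟩ fun _ hr => coSet_lower hlb hr

lemma coSet_translate {h : X → ℝ} {x : X} {m : ℕ} {l : Fin m → ℝ} {z : Fin m → X}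
    (hl : ∀ i, 0 < l i) (hs : ∑ i, l i = 1) (hz : ∑ i, l i • z i = x) (t : X) :
    (∑ i, l i * h (z i + t)) ∈ coSet h (x + t) :=
  ⟨m, l, fun i => z i + t, hl, hs, by
    simp only [smul_add, Finset.sum_add_distrib, hz, ← Finset.sum_smul, hs, one_smul], rfl⟩

lemma coSet_combo {h : X → ℝ} {x y : X} {r s c d : ℝ} (hc : 0 < c) (hd : 0 < d) (hcd : c + d = 1)
    (hr : r ∈ coSet h x) (hs : s ∈ coSet h y) : c * r + d * s ∈ coSet h (c • x + d • y) := by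
  obtain ⟨m1, l1, z1, hl1, hs1, hz1, he1⟩ := hr
  obtain ⟨m2, l2, z2, hl2, hs2, hz2, he2⟩ := hs
  refine ⟨m1 + m2, Fin.addCases (fun i => c * l1 i) (fun i => d * l2 i),
    Fin.addCases z1 z2, ?_, ?_, ?_, ?_⟩
  · intro i
    refine Fin.addCases (fun j => ?_) (fun j => ?_) i
    · simpa using mul_pos hc (hl1 j)
    · simpa using mul_pos hd (hl2 j)
  · rw [Fin.sum_univ_add]
    simp only [Fin.addCases_left, Fin.addCases_right, ← Finset.mul_sum, hs1, hs2]
    linarith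
  · rw [Fin.sum_univ_add]
    simp only [Fin.addCases_left, Fin.addCases_right, mul_smul, ← Finset.smul_sum, hz1, hz2]
  · rw [Fin.sum_univ_add]
    simp only [Fin.addCases_left, Fin.addCases_right, mul_assoc, ← Finset.mul_sum, he1, he2]

lemma convexOn_convEnv {h : X → ℝ} {b : ℝ} {φ : X →L[ℝ] ℝ} (hlb : ∀ z, b + φ z ≤ h z) :
    ConvexOn ℝ Set.univ (convEnv h) := by
  refine ⟨convex_univ, fun x _ y _ c d hc hd hcd => ?_⟩
  rcases eq_or_lt_of_le hc with hc0 | hc0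
  · have : d = 1 := by linarith
    simp [← hc0, this]
  rcases eq_or_lt_of_le hd with hd0 | hd0
  · have : c = 1 := by linarith
    simp [← hd0, this]
  refine le_of_forall_pos_le_add fun ε hε => ?_
  obtain ⟨r, hrmem, hrlt⟩ := Real.lt_sInf_add_pos (⟨h x, self_mem_coSet h x⟩ :
    (coSet h x).Nonempty) (show 0 < ε/2 by linarith)
  obtain ⟨s, hsmem, hslt⟩ := Real.lt_sInf_add_pos (⟨h y, self_mem_coSet h y⟩ :
    (coSet h y).Nonempty) (show 0 < ε/2 by linarith)
  have hmem := coSet_combo hc0 hd0 hcd hrmem hsmem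
  have h1 : convEnv h (c • x + d • y) ≤ c * r + d * s :=
    csInf_le (coSet_bddBelow hlb _) hmem
  rw [← convEnv_eq] at hrlt hslt
  simp only [smul_eq_mul]
  nlinarith [hc0.le, hd0.le]
end B


section C
variable {X : Type*} [NormedAddCommGroup X] [NormedSpace ℝ X]

def slopeSet (u : X → ℝ) (x v : X) : Set ℝ :=
  (fun s : ℝ => (u (x + s • v) - u x) / s) '' Set.Ioi 0

noncomputable def Dder (u : X → ℝ) (x v : X) : ℝ := sInf (slopeSet u x v)

variable {u : X → ℝ}

lemma conv_slope_mono (hu : ConvexOn ℝ Set.univ u) (x v : X) {s t : ℝ}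
    (hs : 0 < s) (hst : s ≤ t) :
    (u (x + s • v) - u x) / s ≤ (u (x + t • v) - u x) / t := by
  have ht : 0 < t := hs.trans_le hst
  have hc2 : 0 ≤ s / t := by positivity
  have hc1 : 0 ≤ 1 - s / t := by
    rw [sub_nonneg]
    exact div_le_one_of_le₀ hst ht.le
  have key := hu.2 (Set.mem_univ x) (Set.mem_univ (x + t • v)) hc1 hc2 (by ring)
  have hmul : s / t * t = s := div_mul_cancel₀ s ht.ne'
  have hpt : (1 - s / t) • x + (s / t) • (x + t • v) = x + s • v := by
    rw [smul_add, smul_smul, hmul]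
    module
  rw [hpt] at key
  simp only [smul_eq_mul] at key
  have key2 : t * u (x + s • v) ≤ t * ((1 - s / t) * u x + s / t * u (x + t • v)) :=
    mul_le_mul_of_nonneg_left key ht.le
  have e : t * ((1 - s / t) * u x + s / t * u (x + t • v))
      = (t - s) * u x + s * u (x + t • v) := by field_simp
  rw [e] at key2
  rw [div_le_div_iff₀ hs ht]
  linarith

lemma conv_slope_cross (hu : ConvexOn ℝ Set.univ u) (x v : X) {s t : ℝ}
    (hs : 0 < s) (ht : 0 < t) :
    (u x - u (x - s • v)) / s ≤ (u (x + t • v) - u x) / t := by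
  have hst : 0 < s + t := by linarith
  have hc1 : 0 ≤ t / (s + t) := by positivity
  have hc2 : 0 ≤ s / (s + t) := by positivity
  have hcd : t / (s + t) + s / (s + t) = 1 := by field_simp; ring
  have key := hu.2 (Set.mem_univ (x - s • v)) (Set.mem_univ (x + t • v)) hc1 hc2 hcd
  have hpt : (t / (s + t)) • (x - s • v) + (s / (s + t)) • (x + t • v)
      = (t / (s + t) + s / (s + t)) • x + (s / (s + t) * t - t / (s + t) * s) • v := by
    module
  rw [hcd, show s / (s + t) * t - t / (s + t) * s = 0 by ring, one_smul, zero_smul,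
    add_zero] at hpt
  rw [hpt] at key
  simp only [smul_eq_mul] at key
  have k3 : (s + t) * u x ≤ t * u (x - s • v) + s * u (x + t • v) := by
    calc (s + t) * u x
        ≤ (s + t) * (t / (s + t) * u (x - s • v) + s / (s + t) * u (x + t • v)) :=
          mul_le_mul_of_nonneg_left key hst.le
      _ = t * u (x - s • v) + s * u (x + t • v) := by field_simp
  rw [div_le_div_iff₀ hs ht]
  linarith

lemma conv_midpoint (hu : ConvexOn ℝ Set.univ u) (x v w : X) (s : ℝ) :
    u (x + s • (v + w)) ≤ (u (x + (2 * s) • v) + u (x + (2 * s) • w)) / 2 := by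
  have key := hu.2 (Set.mem_univ (x + (2 * s) • v)) (Set.mem_univ (x + (2 * s) • w))
    (by norm_num : (0:ℝ) ≤ 1/2) (by norm_num : (0:ℝ) ≤ 1/2) (by norm_num)
  have hpt : (1/2 : ℝ) • (x + (2 * s) • v) + (1/2 : ℝ) • (x + (2 * s) • w)
      = x + s • (v + w) := by module
  rw [hpt] at key
  simp only [smul_eq_mul] at key
  linarith

lemma slope_mem (x v : X) {s : ℝ} (hs : 0 < s) :
    (u (x + s • v) - u x) / s ∈ slopeSet u x v := ⟨s, hs, rfl⟩

lemma slopeSet_nonempty (x v : X) : (slopeSet u x v).Nonempty := ⟨_, slope_mem x v one_pos⟩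

lemma slopeSet_lb (hu : ConvexOn ℝ Set.univ u) (x v : X) :
    ∀ r ∈ slopeSet u x v, u x - u (x - v) ≤ r := by
  rintro r ⟨s, hs, rfl⟩
  have := conv_slope_cross hu x v one_pos hs
  simpa using this

lemma slopeSet_bddBelow (hu : ConvexOn ℝ Set.univ u) (x v : X) :
    BddBelow (slopeSet u x v) := ⟨_, slopeSet_lb hu x v⟩

lemma Dder_le_slope (hu : ConvexOn ℝ Set.univ u) (x v : X) {s : ℝ} (hs : 0 < s) :
    Dder u x v ≤ (u (x + s • v) - u x) / s :=
  csInf_le (slopeSet_bddBelow hu x v) (slope_mem x v hs)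

lemma le_Dder (hu : ConvexOn ℝ Set.univ u) (x v : X) :
    u x - u (x - v) ≤ Dder u x v :=
  le_csInf (slopeSet_nonempty x v) (slopeSet_lb hu x v)

lemma Dder_le (hu : ConvexOn ℝ Set.univ u) (x v : X) :
    Dder u x v ≤ u (x + v) - u x := by
  simpa using Dder_le_slope hu x v one_pos

lemma Dder_zero (hu : ConvexOn ℝ Set.univ u) (x : X) : Dder u x 0 = 0 := by
  have h1 := Dder_le hu x 0
  have h2 := le_Dder hu x 0
  simp at h1 h2
  linarith

lemma Dder_smul_pos (hu : ConvexOn ℝ Set.univ u) (x v : X) {c : ℝ} (hc : 0 < c) :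
    Dder u x (c • v) = c * Dder u x v := by
  have hset : slopeSet u x (c • v) = c • slopeSet u x v := by
    ext r
    constructor
    · rintro ⟨s, hs, rfl⟩
      rw [Set.mem_Ioi] at hs
      refine ⟨(u (x + (s * c) • v) - u x) / (s * c), ⟨s * c, mul_pos hs hc, rfl⟩, ?_⟩
      show c • ((u (x + (s * c) • v) - u x) / (s * c)) = (u (x + s • c • v) - u x) / s
      rw [smul_smul, smul_eq_mul]
      field_simp
    · rintro ⟨r, ⟨s, hs, rfl⟩, rfl⟩
      rw [Set.mem_Ioi] at hs
      refine ⟨s / c, div_pos hs hc, ?_⟩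
      show (u (x + (s / c) • c • v) - u x) / (s / c) = c • ((u (x + s • v) - u x) / s)
      rw [smul_smul, div_mul_cancel₀ _ hc.ne', smul_eq_mul]
      field_simp
  rw [Dder, hset, Real.sInf_smul_of_nonneg hc.le, smul_eq_mul, Dder]

lemma Dder_eq_sInf (x v : X) : Dder u x v = sInf (slopeSet u x v) := rfl

lemma Dder_add_le (hu : ConvexOn ℝ Set.univ u) (x v w : X) :
    Dder u x (v + w) ≤ Dder u x v + Dder u x w := by
  refine le_of_forall_pos_le_add fun ε hε => ?_
  obtain ⟨r1, hr1mem, h1⟩ := Real.lt_sInf_add_pos (slopeSet_nonempty (u := u) x v)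
    (show 0 < ε/2 by linarith)
  obtain ⟨r2, hr2mem, h2⟩ := Real.lt_sInf_add_pos (slopeSet_nonempty (u := u) x w)
    (show 0 < ε/2 by linarith)
  obtain ⟨s1, hs1, rfl⟩ := hr1mem
  obtain ⟨s2, hs2, rfl⟩ := hr2mem
  rw [Set.mem_Ioi] at hs1 hs2
  set s : ℝ := min s1 s2 / 2 with hsdef
  have hs : 0 < s := by positivity
  have h2s : 0 < 2 * s := by positivity
  have h2s1 : 2 * s ≤ s1 := by
    have := min_le_left s1 s2
    rw [hsdef]; linarith
  have h2s2 : 2 * s ≤ s2 := by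
    have := min_le_right s1 s2
    rw [hsdef]; linarith
  have mono1 := conv_slope_mono hu x v h2s h2s1
  have mono2 := conv_slope_mono hu x w h2s h2s2
  have mid := conv_midpoint hu x v w s
  have hD := Dder_le_slope hu x (v + w) hs
  have comb : (u (x + s • (v + w)) - u x) / s
      ≤ (u (x + (2*s) • v) - u x) / (2*s) + (u (x + (2*s) • w) - u x) / (2*s) := by
    rw [← add_div, div_le_div_iff₀ hs h2s]
    nlinarith [mid]
  rw [← Dder_eq_sInf] at h1 h2
  linarith

section sec
variable {C a : ℝ}

lemma Dder_neg_add (hu : ConvexOn ℝ Set.univ u) (ha : 0 < a)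
    (hsec : ∀ x t, u (x + t) + u (x - t) - 2 * u x ≤ C * ‖t‖ ^ a * ‖t‖)
    (x v : X) : Dder u x v + Dder u x (-v) = 0 := by
  have hge : 0 ≤ Dder u x v + Dder u x (-v) := by
    have h1 := Dder_add_le hu x v (-v)
    rw [add_neg_cancel, Dder_zero hu x] at h1
    linarith
  have key : ∀ s : ℝ, 0 < s → Dder u x v + Dder u x (-v) ≤ C * s ^ a * (‖v‖ ^ a * ‖v‖) := by
    intro s hs
    have d1 := Dder_le_slope hu x v hs
    have d2 := Dder_le_slope hu x (-v) hs
    have hsec1 := hsec x (s • v)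
    have hnorm : ‖s • v‖ = s * ‖v‖ := by
      rw [norm_smul, Real.norm_eq_abs, abs_of_pos hs]
    have hrpow : (s * ‖v‖) ^ a = s ^ a * ‖v‖ ^ a := Real.mul_rpow hs.le (norm_nonneg v)
    rw [hnorm, hrpow] at hsec1
    have hxv : x + s • (-v) = x - s • v := by
      rw [smul_neg, sub_eq_add_neg]
    rw [hxv] at d2
    have hcomb : (u (x + s • v) - u x) / s + (u (x - s • v) - u x) / s
        ≤ C * s ^ a * (‖v‖ ^ a * ‖v‖) := by
      rw [← add_div, div_le_iff₀ hs]
      nlinarith [hsec1]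
    linarith
  have h0 : Tendsto (fun s : ℝ => s ^ a) (nhds 0) (nhds 0) := by
    have hc := Real.continuousAt_rpow_const 0 a (Or.inr ha.le)
    have := hc.tendsto
    rwa [Real.zero_rpow ha.ne'] at this
  have htend : Tendsto (fun s : ℝ => C * s ^ a * (‖v‖ ^ a * ‖v‖))
      (nhdsWithin 0 (Set.Ioi 0)) (nhds 0) := by
    have h1 := ((h0.const_mul C).mul_const (‖v‖ ^ a * ‖v‖)).mono_left
      (nhdsWithin_le_nhds (s := Set.Ioi (0:ℝ)))
    simpa using h1
  have hle : Dder u x v + Dder u x (-v) ≤ 0 := by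
    refine ge_of_tendsto htend ?_
    filter_upwards [self_mem_nhdsWithin] with s hs
    exact key s hs
  linarith

lemma Dder_neg (hu : ConvexOn ℝ Set.univ u) (ha : 0 < a)
    (hsec : ∀ x t, u (x + t) + u (x - t) - 2 * u x ≤ C * ‖t‖ ^ a * ‖t‖)
    (x v : X) : Dder u x (-v) = - Dder u x v := by
  have := Dder_neg_add hu ha hsec x v
  linarith

lemma Dder_add (hu : ConvexOn ℝ Set.univ u) (ha : 0 < a)
    (hsec : ∀ x t, u (x + t) + u (x - t) - 2 * u x ≤ C * ‖t‖ ^ a * ‖t‖)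
    (x v w : X) : Dder u x (v + w) = Dder u x v + Dder u x w := by
  have h1 := Dder_add_le hu x v w
  have h2 := Dder_add_le hu x (-v) (-w)
  rw [show -v + -w = -(v + w) by abel, Dder_neg hu ha hsec x (v + w),
    Dder_neg hu ha hsec x v, Dder_neg hu ha hsec x w] at h2
  linarith

lemma Dder_smul (hu : ConvexOn ℝ Set.univ u) (ha : 0 < a)
    (hsec : ∀ x t, u (x + t) + u (x - t) - 2 * u x ≤ C * ‖t‖ ^ a * ‖t‖)
    (x v : X) (c : ℝ) : Dder u x (c • v) = c * Dder u x v := by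
  rcases lt_trichotomy c 0 with h | h | h
  · have he : c • v = (-c) • (-v) := by module
    rw [he, Dder_smul_pos hu x (-v) (neg_pos.2 h), Dder_neg hu ha hsec x v]
    ring
  · rw [h, zero_smul, Dder_zero hu x, zero_mul]
  · exact Dder_smul_pos hu x v h

lemma Dder_est (hu : ConvexOn ℝ Set.univ u)
    (hsec : ∀ x t, u (x + t) + u (x - t) - 2 * u x ≤ C * ‖t‖ ^ a * ‖t‖)
    (x t : X) : Dder u x t ≤ u (x + t) - u x ∧
      u (x + t) - u x ≤ Dder u x t + C * ‖t‖ ^ a * ‖t‖ := by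
  refine ⟨Dder_le hu x t, ?_⟩
  have h1 := hsec x t
  have h2 := le_Dder hu x t
  linarith

lemma convex_secdiff_smooth (hu : ConvexOn ℝ Set.univ u)
    (hC : 0 ≤ C) (ha : 0 < a) (ha1 : a ≤ 1)
    (hsec : ∀ x t, u (x + t) + u (x - t) - 2 * u x ≤ C * ‖t‖ ^ a * ‖t‖)
    {b : ℝ} {φ : X →L[ℝ] ℝ} (hlb : ∀ z, b + φ z ≤ u z) :
    Differentiable ℝ u ∧ ∀ x y : X,
      ‖fderiv ℝ u x - fderiv ℝ u y‖ ≤ 4 * C * ‖x - y‖ ^ a := by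
  classical
  -- unit ball upper bound
  have hub : ∀ (x v : X), ‖v‖ = 1 → u (x + v) - u x ≤ u x - b - φ x + ‖φ‖ + C := by
    intro x v hv
    have h1 := hsec x v
    rw [hv, Real.one_rpow] at h1
    norm_num at h1
    have h2 := hlb (x - v)
    have h3 : φ (x - v) = φ x - φ v := map_sub _ _ _
    have h4 : |φ v| ≤ ‖φ‖ := by
      have := φ.le_opNorm v
      rw [hv, mul_one] at this
      simpa [Real.norm_eq_abs] using this
    have h5 := (abs_le.1 h4).1
    have h6 := (abs_le.1 h4).2
    rw [h3] at h2
    linarith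
  set Q : X → ℝ := fun x => u x - b - φ x + ‖φ‖ + C with hQdef
  have hQ0 : ∀ x, 0 ≤ Q x := by
    intro x
    have h := hlb x
    have := norm_nonneg φ
    simp only [hQdef]
    linarith
  -- bound on Dder
  have Dbound : ∀ (x v : X), |Dder u x v| ≤ Q x * ‖v‖ := by
    intro x v
    rcases eq_or_ne v 0 with rfl | hv
    · simp [Dder_zero hu x]
    · have hn : 0 < ‖v‖ := norm_pos_iff.2 hv
      set e : X := ‖v‖⁻¹ • v with hedef
      have he : ‖e‖ = 1 := by
        rw [hedef, norm_smul, Real.norm_eq_abs, abs_of_pos (inv_pos.2 hn),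
          inv_mul_cancel₀ hn.ne']
      have h1 : Dder u x e ≤ Q x := le_trans (Dder_le hu x e) (hub x e he)
      have h2 : Dder u x (-e) ≤ Q x :=
        le_trans (Dder_le hu x (-e)) (hub x (-e) (by rw [norm_neg, he]))
      rw [Dder_neg hu ha hsec x e] at h2
      have hDe : |Dder u x e| ≤ Q x := abs_le.2 ⟨by linarith, h1⟩
      have hve : v = ‖v‖ • e := by
        rw [hedef, smul_smul, mul_inv_cancel₀ hn.ne', one_smul]
      calc |Dder u x v| = |Dder u x (‖v‖ • e)| := by rw [← hve]
        _ = ‖v‖ * |Dder u x e| := by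
            rw [Dder_smul_pos hu x e hn, abs_mul, abs_of_pos hn]
        _ ≤ ‖v‖ * Q x := by
            exact mul_le_mul_of_nonneg_left hDe hn.le
        _ = Q x * ‖v‖ := mul_comm _ _
  -- the candidate derivative as a continuous linear map
  set p : X → X →L[ℝ] ℝ := fun x => LinearMap.mkContinuous
    { toFun := Dder u x
      map_add' := fun v w => Dder_add hu ha hsec x v w
      map_smul' := fun c v => Dder_smul hu ha hsec x v c }
    (Q x) (fun v => by simpa [Real.norm_eq_abs] using Dbound x v) with hpdef
  have hp_apply : ∀ x v, p x v = Dder u x v := fun x v => rfl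
  -- differentiability
  have hdiff : ∀ x, HasFDerivAt u (p x) x := by
    intro x
    rw [hasFDerivAt_iff_isLittleO_nhds_zero, Asymptotics.isLittleO_iff]
    intro c hc
    have h0 : Tendsto (fun s : ℝ => s ^ a) (nhds 0) (nhds 0) := by
      have hcont := (Real.continuousAt_rpow_const 0 a (Or.inr ha.le)).tendsto
      rwa [Real.zero_rpow ha.ne'] at hcont
    have htend : Tendsto (fun t : X => C * ‖t‖ ^ a) (nhds 0) (nhds 0) := by
      have h1 := (h0.comp (tendsto_norm_zero (E := X))).const_mul C
      simpa using h1
    have hev : ∀ᶠ t : X in nhds 0, C * ‖t‖ ^ a < c := htend.eventually_lt_const hc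
    filter_upwards [hev] with t hevt
    have h1 := Dder_est hu hsec x t
    have h2 : ‖u (x + t) - u x - p x t‖ ≤ C * ‖t‖ ^ a * ‖t‖ := by
      rw [hp_apply, Real.norm_eq_abs, abs_le]
      constructor
      · have : (0:ℝ) ≤ C * ‖t‖ ^ a * ‖t‖ := by positivity
        linarith [h1.1]
      · linarith [h1.2]
    calc ‖u (x + t) - u x - p x t‖ ≤ C * ‖t‖ ^ a * ‖t‖ := h2
      _ ≤ c * ‖t‖ := by nlinarith [norm_nonneg t, hevt]
  have hfd : ∀ x, fderiv ℝ u x = p x := fun x => (hdiff x).fderiv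
  refine ⟨fun x => (hdiff x).differentiableAt, fun x y => ?_⟩
  rcases eq_or_ne x y with rfl | hxy
  · rw [sub_self, norm_zero, sub_self, norm_zero, Real.zero_rpow ha.ne', mul_zero]
  · set r : ℝ := ‖x - y‖ with hrdef
    have hr : 0 < r := by
      rw [hrdef, norm_pos_iff]
      exact sub_ne_zero.2 hxy
    have key1 : ∀ x' y' v : X, Dder u x' v - Dder u y' v
        ≤ C * (‖x' - y'‖ + ‖v‖) ^ a * (‖x' - y'‖ + ‖v‖) := by
      intro x' y' v
      have h1 : Dder u x' v ≤ u (x' + v) - u x' := Dder_le hu x' v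
      have h2 := (Dder_est hu hsec y' (x' - y' + v)).2
      have h3 : Dder u y' (x' - y') ≤ u (y' + (x' - y')) - u y' := Dder_le hu y' _
      have e1 : y' + (x' - y' + v) = x' + v := by abel
      have e2 : y' + (x' - y') = x' := by abel
      have e3 : Dder u y' (x' - y' + v) = Dder u y' (x' - y') + Dder u y' v :=
        Dder_add hu ha hsec y' _ _
      rw [e1, e3] at h2
      rw [e2] at h3
      have hnv : ‖x' - y' + v‖ ≤ ‖x' - y'‖ + ‖v‖ := norm_add_le _ _
      have hmono : C * ‖x' - y' + v‖ ^ a * ‖x' - y' + v‖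
          ≤ C * (‖x' - y'‖ + ‖v‖) ^ a * (‖x' - y'‖ + ‖v‖) := by
        gcongr
      linarith
    have h2c : (2:ℝ) ^ a ≤ 2 := by
      calc (2:ℝ) ^ a ≤ (2:ℝ) ^ (1:ℝ) :=
            Real.rpow_le_rpow_of_exponent_le one_le_two ha1
        _ = 2 := Real.rpow_one 2
    have oneside : ∀ x' y' v : X, ‖x' - y'‖ = r →
        Dder u x' v - Dder u y' v ≤ 4 * C * r ^ a * ‖v‖ := by
      intro x' y' v hxy'
      rcases eq_or_ne v 0 with rfl | hv
      · simp [Dder_zero hu]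
      · have hnv : 0 < ‖v‖ := norm_pos_iff.2 hv
        set w : X := (r / ‖v‖) • v with hwdef
        have hc' : 0 < r / ‖v‖ := div_pos hr hnv
        have hw : ‖w‖ = r := by
          rw [hwdef, norm_smul, Real.norm_eq_abs, abs_of_pos hc', div_mul_cancel₀ _ hnv.ne']
        have h1 := key1 x' y' w
        rw [hxy', hw] at h1
        have hrr : ‖x' - y'‖ + ‖w‖ = 2 * r := by rw [hxy', hw]; ring
        have h2 : Dder u x' w - Dder u y' w ≤ C * (2 * r) ^ a * (2 * r) := by
          have := key1 x' y' w
          rw [hxy', hw, show r + r = 2*r by ring] at this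
          exact this
        have h2b : (2 * r : ℝ) ^ a = 2 ^ a * r ^ a := Real.mul_rpow (by norm_num) hr.le
        have h3 : Dder u x' w - Dder u y' w ≤ 4 * C * r ^ a * r := by
          rw [h2b] at h2
          have hm := mul_le_mul_of_nonneg_right h2c
            (show (0:ℝ) ≤ C * r ^ a * r by positivity)
          linarith
        have hsm1 : Dder u x' w = (r / ‖v‖) * Dder u x' v := by
          rw [hwdef, Dder_smul_pos hu x' v hc']
        have hsm2 : Dder u y' w = (r / ‖v‖) * Dder u y' v := by
          rw [hwdef, Dder_smul_pos hu y' v hc']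
        rw [hsm1, hsm2, ← mul_sub] at h3
        have h4 : Dder u x' v - Dder u y' v ≤ (4 * C * r ^ a * r) * (‖v‖ / r) := by
          have := mul_le_mul_of_nonneg_left h3 (le_of_lt (div_pos hnv hr))
          calc Dder u x' v - Dder u y' v
              = (‖v‖ / r) * ((r / ‖v‖) * (Dder u x' v - Dder u y' v)) := by
                field_simp
            _ ≤ (‖v‖ / r) * (4 * C * r ^ a * r) := this
            _ = (4 * C * r ^ a * r) * (‖v‖ / r) := mul_comm _ _
        calc Dder u x' v - Dder u y' v ≤ (4 * C * r ^ a * r) * (‖v‖ / r) := h4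
          _ = 4 * C * r ^ a * ‖v‖ := by field_simp
    rw [hfd x, hfd y]
    refine ContinuousLinearMap.opNorm_le_bound _ (by positivity) fun v => ?_
    have hxy1 : ‖x - y‖ = r := rfl
    have hxy2 : ‖y - x‖ = r := by rw [norm_sub_rev]
    have b1 := oneside x y v hxy1
    have b2 := oneside y x v hxy2
    rw [ContinuousLinearMap.sub_apply, hp_apply, hp_apply, Real.norm_eq_abs]
    rw [abs_le]
    constructor
    · linarith
    · linarith

end sec

lemma convex_tangent {φ : X → ℝ} (hconv : ConvexOn ℝ Set.univ φ) (hdiff : Differentiable ℝ φ)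
    (x z : X) : φ x + (fderiv ℝ φ x) (z - x) ≤ φ z := by
  have hq : HasDerivAt (fun s : ℝ => φ (x + s • (z - x))) ((fderiv ℝ φ x) (z - x)) 0 := by
    have hinner : HasDerivAt (fun s : ℝ => x + s • (z - x)) (z - x) 0 := by
      have h1 : HasDerivAt (fun s : ℝ => s • (z - x)) ((1:ℝ) • (z - x)) 0 :=
        (hasDerivAt_id 0).smul_const (z - x)
      simpa using h1.const_add x
    have h2 := (hdiff (x + (0:ℝ) • (z - x))).hasFDerivAt.comp_hasDerivAt 0 hinner
    simpa [Function.comp_def] using h2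
  rw [hasDerivAt_iff_tendsto_slope] at hq
  have hq2 : Tendsto (slope (fun s : ℝ => φ (x + s • (z - x))) 0)
      (nhdsWithin 0 (Set.Ioi 0)) (nhds ((fderiv ℝ φ x) (z - x))) :=
    hq.mono_left (nhdsWithin_mono 0 (fun s hs => ne_of_gt hs))
  have hle : (fderiv ℝ φ x) (z - x) ≤ φ z - φ x := by
    refine le_of_tendsto hq2 ?_
    filter_upwards [Ioc_mem_nhdsGT_of_mem (Set.mem_Ico.2 ⟨le_refl (0:ℝ), one_pos⟩)] with s hs
    rw [Set.mem_Ioc] at hs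
    have hmono := conv_slope_mono hconv x (z - x) hs.1 hs.2
    rw [show x + (1:ℝ) • (z - x) = z by module, div_one] at hmono
    simp only [slope_def_field, sub_zero]
    rw [show x + (0:ℝ) • (z - x) = x by module]
    exact hmono
  linarith

end C

end AUX

set_option maxHeartbeats 1600000 in
/-- Let `K` be a kernel satisfying conditions (1)–(5) (with `K(x,y) = c_K(x) − d_K(x,y)`,
where `d_K(·,y)` is lower semicontinuous and convex), and let `f` be proper, lower
semicontinuous and bounded below. If `c_K` is Fréchet differentiable with `α`-Hölder
continuous derivative on `X` (`0 < α ≤ 1`), then so is each `Δ_{K,n} f`. -/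
theorem stmt_15 {X : Type*} [NormedAddCommGroup X] [NormedSpace ℝ X] [CompleteSpace X]
    (K : X → X → ℝ) (cK : X → ℝ) (dK : X → X → ℝ)
    (hK1 : (∀ x y : X, 0 ≤ K x y) ∧ ∀ x : X, K x x = 0)
    (hK2 : ∀ x y : X, K x y = K y x)
    (hK3 : ∀ r M : ℝ, 0 < r → 0 < M → ∃ R : ℝ, ∀ x y : X, ‖x‖ ≤ r → R ≤ ‖y‖ → M ≤ K x y)
    (hK4 : ∀ s : Set (X × X), Bornology.IsBounded s →
      UniformContinuousOn (fun q : X × X => K q.1 q.2) s)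
    (hK5 : (∀ x y : X, K x y = cK x - dK x y) ∧
      ∀ y : X, LowerSemicontinuous (fun x => dK x y) ∧
        ConvexOn ℝ Set.univ (fun x => dK x y))
    (f : X → EReal)
    (hproper : ∃ x, f x ≠ ⊤)
    (hlsc : LowerSemicontinuous f)
    (hbdd : ∃ m : ℝ, ∀ x, (m : EReal) ≤ f x)
    (α : ℝ) (hα0 : 0 < α) (hα1 : α ≤ 1)
    (hcdiff : Differentiable ℝ cK)
    (hchold : ∃ L : ℝ, 0 < L ∧ ∀ x y : X,
      ‖fderiv ℝ cK x - fderiv ℝ cK y‖ ≤ L * ‖x - y‖ ^ α)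
    (n : ℕ) (hn : 0 < n) :
    Differentiable ℝ (DeltaK K cK f n) ∧
    ∃ L : ℝ, 0 < L ∧ ∀ x y : X,
      ‖fderiv ℝ (DeltaK K cK f n) x - fderiv ℝ (DeltaK K cK f n) y‖ ≤
        L * ‖x - y‖ ^ α := by
  classical
  obtain ⟨L, hL, hLip⟩ := hchold
  obtain ⟨m0, hm0⟩ := hbdd
  obtain ⟨y₀, hy₀⟩ := hproper
  have hn1 : (1:ℝ) ≤ (n:ℝ) := by exact_mod_cast hn
  have hn0 : (0:ℝ) ≤ (n:ℝ) := by linarith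
  set g : X → ℝ := fun z => (infConvK K f n z).toReal + (n : ℝ) * cK z with hgdef
  -- kernel structure facts
  have hdKcK : ∀ x y : X, dK x y ≤ cK x := by
    intro x y
    have h0 := hK1.1 x y
    have h5 := hK5.1 x y
    linarith
  have hcKdK : ∀ x : X, cK x = dK x x := by
    intro x
    have h0 := hK1.2 x
    have h5 := hK5.1 x x
    linarith
  have hcKconv : ConvexOn ℝ Set.univ cK := by
    refine ⟨convex_univ, fun x _ y _ c d hc hd hcd => ?_⟩
    have h1 := ((hK5.2 (c • x + d • y)).2).2 (Set.mem_univ x) (Set.mem_univ y) hc hd hcd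
    have h2 := hdKcK x (c • x + d • y)
    have h3 := hdKcK y (c • x + d • y)
    simp only [smul_eq_mul] at h1 ⊢
    rw [hcKdK (c • x + d • y)]
    have h4 := mul_le_mul_of_nonneg_left h2 hc
    have h5 := mul_le_mul_of_nonneg_left h3 hd
    linarith
  -- EReal facts about the inf-convolution
  have hIlb : ∀ z, (m0 : EReal) ≤ infConvK K f n z := by
    intro z
    refine le_iInf fun y => ?_
    have h1 : (m0 : EReal) ≤ f y := hm0 y
    have h2 : (0:ℝ) ≤ (n:ℝ) * K z y := mul_nonneg hn0 (hK1.1 z y)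
    have h3 : ((0:ℝ):EReal) ≤ (((n:ℝ) * K z y : ℝ) : EReal) := by exact_mod_cast h2
    calc (m0 : EReal) = (m0 : EReal) + ((0:ℝ):EReal) := by norm_num
      _ ≤ f y + (((n:ℝ) * K z y : ℝ) : EReal) := add_le_add h1 h3
  have hInebot : ∀ z, infConvK K f n z ≠ ⊥ := fun z =>
    ((EReal.bot_lt_coe m0).trans_le (hIlb z)).ne'
  have hInetop : ∀ z, infConvK K f n z ≠ ⊤ := by
    intro z
    have hlt : f y₀ + (((n:ℝ) * K z y₀ : ℝ) : EReal) < ⊤ :=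
      EReal.add_lt_top hy₀ (EReal.coe_ne_top _)
    exact ((iInf_le (fun y => f y + (((n:ℝ) * K z y : ℝ) : EReal)) y₀).trans_lt hlt).ne
  have hIcoe : ∀ z, (((infConvK K f n z).toReal : ℝ) : EReal) = infConvK K f n z :=
    fun z => EReal.coe_toReal (hInetop z) (hInebot z)
  have hIm : ∀ z, m0 ≤ (infConvK K f n z).toReal := by
    intro z
    have h := hIlb z
    rw [← hIcoe z] at h
    exact_mod_cast h
  have hfbot : ∀ y : X, f y ≠ ⊥ := fun y => ((EReal.bot_lt_coe m0).trans_le (hm0 y)).ne'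
  have hIineq : ∀ z y : X, f y ≠ ⊤ →
      (infConvK K f n z).toReal ≤ (f y).toReal + (n:ℝ) * K z y := by
    intro z y hytop
    have h : infConvK K f n z ≤ f y + (((n:ℝ) * K z y : ℝ) : EReal) := iInf_le _ y
    rw [← hIcoe z, show f y = (((f y).toReal : ℝ) : EReal) from
      (EReal.coe_toReal hytop (hfbot y)).symm, ← EReal.coe_add] at h
    exact_mod_cast h
  have hIapprox : ∀ z : X, ∀ ε : ℝ, 0 < ε → ∃ y : X, f y ≠ ⊤ ∧
      (f y).toReal + (n:ℝ) * K z y < (infConvK K f n z).toReal + ε := by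
    intro z ε hε
    have hlt : infConvK K f n z < (((infConvK K f n z).toReal + ε : ℝ) : EReal) := by
      conv_lhs => rw [← hIcoe z]
      exact_mod_cast lt_add_of_pos_right ((infConvK K f n z).toReal) hε
    obtain ⟨y, hy⟩ := iInf_lt_iff.1 hlt
    have hytop : f y ≠ ⊤ := by
      intro htop
      rw [htop, EReal.top_add_coe] at hy
      exact not_top_lt hy
    refine ⟨y, hytop, ?_⟩
    rw [show f y = (((f y).toReal : ℝ) : EReal) from
      (EReal.coe_toReal hytop (hfbot y)).symm, ← EReal.coe_add] at hy
    exact_mod_cast hy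
  -- second difference estimates
  have hsecK : ∀ z t : X, cK (z + t) + cK (z - t) - 2 * cK z ≤ 2 * L * ‖t‖ ^ α * ‖t‖ :=
    secdiff_holder cK hcdiff hα0 hL.le hLip
  have hgsec : ∀ z t : X, g (z + t) + g (z - t) - 2 * g z ≤ 4 * (n:ℝ) * L * ‖t‖ ^ α * ‖t‖ := by
    intro z t
    refine le_of_forall_pos_le_add fun ε hε => ?_
    obtain ⟨y, hytop, hylt⟩ := hIapprox z (ε / 2) (by linarith)
    have hI1 := hIineq (z + t) y hytop
    have hI2 := hIineq (z - t) y hytop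
    have hKsec : K (z + t) y + K (z - t) y - 2 * K z y ≤ 2 * L * ‖t‖ ^ α * ‖t‖ := by
      have hd := ((hK5.2 y).2).2 (Set.mem_univ (z + t)) (Set.mem_univ (z - t))
        (by norm_num : (0:ℝ) ≤ 1/2) (by norm_num : (0:ℝ) ≤ 1/2) (by norm_num)
      rw [show (1/2 : ℝ) • (z + t) + (1/2 : ℝ) • (z - t) = z by module] at hd
      simp only [smul_eq_mul] at hd
      have e1 := hK5.1 (z + t) y
      have e2 := hK5.1 (z - t) y
      have e3 := hK5.1 z y
      have e4 := hsecK z t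
      linarith
    have hmul := mul_le_mul_of_nonneg_left hKsec hn0
    have hcK2 := mul_le_mul_of_nonneg_left (hsecK z t) hn0
    have hIy : (f y).toReal + (n:ℝ) * K z y < (infConvK K f n z).toReal + ε / 2 := hylt
    have hLn : (n:ℝ) * (2 * L * ‖t‖ ^ α * ‖t‖) + (n:ℝ) * (2 * L * ‖t‖ ^ α * ‖t‖)
        = 4 * (n:ℝ) * L * ‖t‖ ^ α * ‖t‖ := by ring
    simp only [hgdef]
    nlinarith [hI1, hI2, hmul, hcK2, hIy]
  -- affine minorant of g
  have htangent : ∀ x z : X, cK x + (fderiv ℝ cK x) (z - x) ≤ cK z :=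
    convex_tangent hcKconv hcdiff
  set φ0 : X →L[ℝ] ℝ := (n:ℝ) • fderiv ℝ cK 0 with hφ0def
  set b0 : ℝ := m0 + (n:ℝ) * cK 0 with hb0def
  have hglb : ∀ z, b0 + φ0 z ≤ g z := by
    intro z
    have h1 := htangent 0 z
    rw [sub_zero] at h1
    have h2 := hIm z
    have h3 := mul_le_mul_of_nonneg_left h1 hn0
    have h4 : φ0 z = (n:ℝ) * (fderiv ℝ cK 0) z := by
      rw [hφ0def]; simp
    simp only [hgdef, hb0def, h4]
    nlinarith [h3]
  -- the convex envelope u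
  have hconvu : ConvexOn ℝ Set.univ (convEnv g) := convexOn_convEnv hglb
  have husec : ∀ x t : X, convEnv g (x + t) + convEnv g (x - t) - 2 * convEnv g x
      ≤ 4 * (n:ℝ) * L * ‖t‖ ^ α * ‖t‖ := by
    intro x t
    refine le_of_forall_pos_le_add fun ε hε => ?_
    obtain ⟨r, hrmem, hrlt⟩ := Real.lt_sInf_add_pos
      (⟨g x, self_mem_coSet g x⟩ : (coSet g x).Nonempty) (show 0 < ε / 2 by linarith)
    obtain ⟨mm, l, z, hl, hs, hz, hsum⟩ := hrmem
    have h1 : convEnv g (x + t) ≤ ∑ i, l i * g (z i + t) :=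
      csInf_le (coSet_bddBelow hglb _) (coSet_translate hl hs hz t)
    have h2 : convEnv g (x - t) ≤ ∑ i, l i * g (z i - t) := by
      have := csInf_le (coSet_bddBelow hglb _) (coSet_translate hl hs hz (-t))
      simpa [sub_eq_add_neg, convEnv_eq] using this
    have h3 : ∑ i, l i * g (z i + t) + ∑ i, l i * g (z i - t)
        ≤ 2 * r + 4 * (n:ℝ) * L * ‖t‖ ^ α * ‖t‖ := by
      have hstep : ∀ i, l i * g (z i + t) + l i * g (z i - t)
          ≤ l i * (2 * g (z i) + 4 * (n:ℝ) * L * ‖t‖ ^ α * ‖t‖) := by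
        intro i
        have := hgsec (z i) t
        have hli := (hl i).le
        nlinarith [mul_le_mul_of_nonneg_left (hgsec (z i) t) hli]
      calc ∑ i, l i * g (z i + t) + ∑ i, l i * g (z i - t)
          = ∑ i, (l i * g (z i + t) + l i * g (z i - t)) := by
            rw [Finset.sum_add_distrib]
        _ ≤ ∑ i, l i * (2 * g (z i) + 4 * (n:ℝ) * L * ‖t‖ ^ α * ‖t‖) :=
            Finset.sum_le_sum fun i _ => hstep i
        _ = ∑ i, (2 * (l i * g (z i)) + l i * (4 * (n:ℝ) * L * ‖t‖ ^ α * ‖t‖)) :=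
            Finset.sum_congr rfl fun i _ => by ring
        _ = 2 * (∑ i, l i * g (z i)) + (∑ i, l i) * (4 * (n:ℝ) * L * ‖t‖ ^ α * ‖t‖) := by
            rw [Finset.sum_add_distrib, ← Finset.mul_sum, ← Finset.sum_mul]
        _ = 2 * r + 4 * (n:ℝ) * L * ‖t‖ ^ α * ‖t‖ := by
            rw [hsum, hs, one_mul]
    have hroot : convEnv g x = sInf (coSet g x) := rfl
    linarith
  -- apply the main regularity lemma
  have hCpos : (0:ℝ) ≤ 4 * (n:ℝ) * L := by positivity
  obtain ⟨hudiff, huhold⟩ := convex_secdiff_smooth hconvu hCpos hα0 hα1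
    (fun x t => husec x t) (fun z => le_convEnv hglb z)
  -- identification of DeltaK
  have hDK : DeltaK K cK f n = fun x => convEnv g x - (n:ℝ) * cK x := rfl
  have hncK : Differentiable ℝ (fun x => (n:ℝ) * cK x) := hcdiff.const_mul _
  have hdiffD : Differentiable ℝ (DeltaK K cK f n) := by
    rw [hDK]
    exact hudiff.sub hncK
  have hfderivD : ∀ x, fderiv ℝ (DeltaK K cK f n) x
      = fderiv ℝ (convEnv g) x - (n:ℝ) • fderiv ℝ cK x := by
    intro x
    rw [hDK]
    rw [fderiv_fun_sub (hudiff x) (hncK x), fderiv_const_mul (hcdiff x)]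
  refine ⟨hdiffD, 17 * (n:ℝ) * L, by nlinarith, fun x y => ?_⟩
  rw [hfderivD x, hfderivD y]
  have e1 : fderiv ℝ (convEnv g) x - (n:ℝ) • fderiv ℝ cK x
      - (fderiv ℝ (convEnv g) y - (n:ℝ) • fderiv ℝ cK y)
      = (fderiv ℝ (convEnv g) x - fderiv ℝ (convEnv g) y)
        - (n:ℝ) • (fderiv ℝ cK x - fderiv ℝ cK y) := by
    rw [smul_sub]; abel
  rw [e1]
  have h1 := huhold x y
  have h2 : ‖(n:ℝ) • (fderiv ℝ cK x - fderiv ℝ cK y)‖ ≤ (n:ℝ) * (L * ‖x - y‖ ^ α) := by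
    rw [norm_smul, Real.norm_eq_abs, abs_of_nonneg hn0]
    exact mul_le_mul_of_nonneg_left (hLip x y) hn0
  calc ‖(fderiv ℝ (convEnv g) x - fderiv ℝ (convEnv g) y)
        - (n:ℝ) • (fderiv ℝ cK x - fderiv ℝ cK y)‖
      ≤ ‖fderiv ℝ (convEnv g) x - fderiv ℝ (convEnv g) y‖
        + ‖(n:ℝ) • (fderiv ℝ cK x - fderiv ℝ cK y)‖ := norm_sub_le _ _
    _ ≤ 4 * (4 * (n:ℝ) * L) * ‖x - y‖ ^ α + (n:ℝ) * (L * ‖x - y‖ ^ α) := by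
        exact add_le_add h1 h2
    _ ≤ 17 * (n:ℝ) * L * ‖x - y‖ ^ α := by
        have := Real.rpow_nonneg (norm_nonneg (x - y)) α
        nlinarith
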